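/- Let H be a complex Hilbert space and T : H → H a linear bijection such that x ⊥ y implies T x ⊥ T y for all x, y ∈ H, and such that ‖T e‖ = ‖T f‖ for all orthonormal pairs e, f. Then some nonzero scalar multiple of T is unitary. -/

import Mathlib

theorem orthogonality_preserving_bijection_scalar_multiple_unitary
    {H : Type*} [NormedAddCommGroup H] [InnerProductSpace ℂ H] [CompleteSpace H]
    (hdim : 2 ≤ Module.rank ℂ H)
    (T : H →ₗ[ℂ] H) (hbij : Function.Bijective T)
    (horth : ∀ x y : H, (inner ℂ x y : ℂ) = 0 → (inner ℂ (T x) (T y) : ℂ) = 0)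
    (hnorm : ∀ e f : H, ‖e‖ = 1 → ‖f‖ = 1 → (inner ℂ e f : ℂ) = 0 → ‖T e‖ = ‖T f‖) :
    ∃ c : ℂ, c ≠ 0 ∧ ∀ x : H, ‖c • T x‖ = ‖x‖ := by
  have hnt : Nontrivial H := by
    rw [← rank_pos_iff_nontrivial (R := ℂ)]
    exact lt_of_lt_of_le (by norm_num) hdim
  obtain ⟨v0, hv0⟩ := exists_ne (0 : H)
  have hv0n : ‖v0‖ ≠ 0 := norm_ne_zero_iff.mpr hv0
  set e : H := (‖v0‖⁻¹ : ℂ) • v0 with he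
  have hev : ‖e‖ = 1 := by
    rw [he, norm_smul]
    simp [hv0n]
  -- key: ‖T u‖ = ‖T v‖ for all unit vectors u, v
  have key : ∀ u v : H, ‖u‖ = 1 → ‖v‖ = 1 → ‖T u‖ = ‖T v‖ := by
    intro u v hu hv
    set a : ℂ := inner ℂ u v with ha
    set c : ℂ := if a = 0 then 1 else (starRingEnd ℂ) a / ‖a‖ with hc
    have hcn : ‖c‖ = 1 := by
      rw [hc]
      split_ifs with h
      · simp
      · rw [norm_div, RCLike.norm_conj, Complex.norm_real, Real.norm_eq_abs, abs_norm,
          div_self (norm_ne_zero_iff.mpr h)]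
    have hc1 : (starRingEnd ℂ) c * c = 1 := by
      rw [RCLike.conj_mul, hcn]
      norm_num
    have hca : c * a = (‖a‖ : ℂ) := by
      rw [hc]
      split_ifs with h
      · simp [h]
      · have han : (‖a‖ : ℂ) ≠ 0 := by
          exact_mod_cast norm_ne_zero_iff.mpr h
        rw [div_mul_eq_mul_div, RCLike.conj_mul]
        push_cast
        rw [sq]
        field_simp
        rfl
    have hconj : (starRingEnd ℂ) c * (starRingEnd ℂ) a = (‖a‖ : ℂ) := by
      rw [← map_mul, hca]
      simp
    have h1 : (inner ℂ u u : ℂ) = 1 := by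
      rw [inner_self_eq_norm_sq_to_K (𝕜 := ℂ), hu]; norm_num
    have h2 : (inner ℂ v v : ℂ) = 1 := by
      rw [inner_self_eq_norm_sq_to_K (𝕜 := ℂ), hv]; norm_num
    have h3 : (inner ℂ v u : ℂ) = (starRingEnd ℂ) a := by
      rw [ha, inner_conj_symm]
    have h0 : (inner ℂ (u + c • v) (u - c • v) : ℂ) = 0 := by
      simp only [inner_add_left, inner_sub_right, inner_smul_left, inner_smul_right,
        ← ha, h1, h2, h3]
      linear_combination hconj - hca - hc1
    have h4 := horth _ _ h0
    simp only [map_add, map_sub, map_smul] at h4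
    set b : ℂ := inner ℂ (T u) (T v) with hb
    have h5 : (inner ℂ (T v) (T u) : ℂ) = (starRingEnd ℂ) b := by
      rw [hb, inner_conj_symm]
    simp only [inner_add_left, inner_sub_right, inner_smul_left, inner_smul_right,
      ← hb, h5] at h4
    have h6 : ((‖T u‖ : ℂ))^2 - (‖T v‖ : ℂ)^2 = c * b - (starRingEnd ℂ) c * (starRingEnd ℂ) b := by
      have hTu : (inner ℂ (T u) (T u) : ℂ) = (‖T u‖ : ℂ)^2 := by
        rw [inner_self_eq_norm_sq_to_K (𝕜 := ℂ)]; norm_cast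
      have hTv : (inner ℂ (T v) (T v) : ℂ) = (‖T v‖ : ℂ)^2 := by
        rw [inner_self_eq_norm_sq_to_K (𝕜 := ℂ)]; norm_cast
      rw [hTu, hTv] at h4
      linear_combination h4 + (‖T v‖:ℂ)^2 * hc1
    have h7 : ‖T u‖^2 = ‖T v‖^2 := by
      have := congrArg Complex.re h6
      simp [Complex.sub_re, ← map_mul, Complex.conj_re, ← Complex.ofReal_pow] at this
      linarith
    rw [sq_eq_sq_iff_abs_eq_abs, abs_norm, abs_norm] at h7
    exact h7
  have hTe : ‖T e‖ ≠ 0 := by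
    rw [norm_ne_zero_iff]
    intro h
    have : e = 0 := hbij.injective (by simpa using h)
    rw [this] at hev
    simp at hev
  refine ⟨((‖T e‖ : ℝ) : ℂ)⁻¹, by exact_mod_cast inv_ne_zero (by exact_mod_cast hTe), ?_⟩
  intro x
  by_cases hx : x = 0
  · simp [hx]
  · have hxn : ‖x‖ ≠ 0 := norm_ne_zero_iff.mpr hx
    have hu : ‖(‖x‖⁻¹ : ℂ) • x‖ = 1 := by
      rw [norm_smul]; simp [hxn]
    have hk := key _ e hu hev
    rw [map_smul, norm_smul] at hk
    simp only [norm_inv, Complex.norm_real, Real.norm_eq_abs, abs_norm] at hk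
    have hTx : ‖T x‖ = ‖x‖ * ‖T e‖ := by
      field_simp at hk
      linarith [hk]
    rw [norm_smul, hTx]
    simp [hTe]
    field_simp
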